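/- Local switches terminate: define a potential function Φ on solutions ξ of a DR instance as the number of 2×2 blocks B(i,j) whose pattern is ξ_{i,j} = ξ_{i+1,j+1} = 1 and ξ_{i+1,j} = ξ_{i,j+1} = 0 (type B₃₃). Each local switch of classes 1–5 and 7 (as defined in the paper, each creating at least one new B₃₃ block and destroying none) strictly increases Φ. Since Φ is bounded above by the total number of blocks mn/4, any sequence of such switches is finite. -/

import Mathlib

open Finset

/-- Corner set `C(m,n,2)`: points of `[m]×[n]` with both coordinates odd. -/
def cornerSet (m n : ℕ) : Finset (ℕ × ℕ) :=
  ((Finset.Icc 1 m) ×ˢ (Finset.Icc 1 n)).filter (fun p => p.1 % 2 = 1 ∧ p.2 % 2 = 1)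

/-- The 2×2 block with lower-left corner `(i,j)`. -/
def block2 (i j : ℕ) : Finset (ℕ × ℕ) :=
  {(i, j), (i + 1, j), (i, j + 1), (i + 1, j + 1)}

/-- `G(I)`: union of the blocks with corners in `I`. -/
def gridG (I : Finset (ℕ × ℕ)) : Finset (ℕ × ℕ) :=
  I.biUnion (fun p => block2 p.1 p.2)

/-- `ρ_j(i) = |([i]×{j}) ∩ I|`. -/
def rhoI (I : Finset (ℕ × ℕ)) (j i : ℕ) : ℕ :=
  (I.filter (fun p => p.1 ≤ i ∧ p.2 = j)).card

/-- `σ_i(j) = |({i}×[j]) ∩ I|`. -/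
def sigmaI (I : Finset (ℕ × ℕ)) (i j : ℕ) : ℕ :=
  (I.filter (fun p => p.1 = i ∧ p.2 ≤ j)).card

/-- Projection of `I` onto the second coordinate. -/
def PiY (I : Finset (ℕ × ℕ)) : Finset ℕ := I.image Prod.snd

/-- Projection of `I` onto the first coordinate. -/
def PiX (I : Finset (ℕ × ℕ)) : Finset ℕ := I.image Prod.fst

/-- A solution of the single-graylevel problem `DR(ν)` on `G(I)`:
a 0/1-assignment with prescribed row and column sums and exactly `ν` ones per block. -/
def IsDRSol (I : Finset (ℕ × ℕ)) (r c : ℕ → ℕ) (ν : ℕ) (ξ : ℕ × ℕ → ℕ) : Prop :=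
  (∀ p ∈ gridG I, ξ p ≤ 1) ∧
  (∀ j ∈ PiY I, ∀ l ∈ ({0, 1} : Finset ℕ),
    ∑ p ∈ (gridG I).filter (fun q => q.2 = j + l), ξ p = r (j + l)) ∧
  (∀ i ∈ PiX I, ∀ l ∈ ({0, 1} : Finset ℕ),
    ∑ p ∈ (gridG I).filter (fun q => q.1 = i + l), ξ p = c (i + l)) ∧
  (∀ p ∈ I, ∑ q ∈ block2 p.1 p.2, ξ q = ν)

/-- The potential `Φ`: number of blocks of type `𝔅₃₃`, i.e. with
`ξ_{i,j} = ξ_{i+1,j+1} = 1` and `ξ_{i+1,j} = ξ_{i,j+1} = 0`. -/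
def Phi (m n : ℕ) (ξ : ℕ × ℕ → ℕ) : ℕ :=
  ((cornerSet m n).filter (fun p =>
    ξ (p.1, p.2) = 1 ∧ ξ (p.1 + 1, p.2 + 1) = 1 ∧
    ξ (p.1 + 1, p.2) = 0 ∧ ξ (p.1, p.2 + 1) = 0)).card

lemma card_corner_le (m n : ℕ) (hm2 : m % 2 = 0) (hn2 : n % 2 = 0) :
    (cornerSet m n).card ≤ m * n / 4 := by
  obtain ⟨a, rfl⟩ : ∃ a, m = 2 * a := ⟨m / 2, by omega⟩
  obtain ⟨b, rfl⟩ : ∃ b, n = 2 * b := ⟨n / 2, by omega⟩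
  have h4 : 2 * a * (2 * b) / 4 = a * b := by
    rw [show 2 * a * (2 * b) = 4 * (a * b) by ring]
    exact Nat.mul_div_cancel_left _ (by norm_num)
  rw [h4]
  have := Finset.card_le_card_of_injOn (f := fun p : ℕ × ℕ => ((p.1 - 1) / 2, (p.2 - 1) / 2))
    (s := cornerSet (2*a) (2*b)) (t := Finset.range a ×ˢ Finset.range b) ?_ ?_
  · simpa using this
  · intro p hp
    simp only [cornerSet, Finset.mem_coe, mem_filter, mem_product, mem_Icc] at hp
    simp only [Finset.mem_coe, mem_product, mem_range]
    omega
  · intro p hp q hq h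
    simp only [cornerSet, Finset.mem_coe, mem_filter, mem_product, mem_Icc] at hp hq
    simp only [Prod.mk.injEq] at h
    ext <;> omega

lemma switch_increases (m n : ℕ) (i j : ℕ) (hij : (i, j) ∈ cornerSet m n)
    (ξ : ℕ × ℕ → ℕ) (h0 : ξ (i, j) = 0) (h0' : ξ (i + 1, j + 1) = 0)
    (h1 : ξ (i + 1, j) = 1) (h1' : ξ (i, j + 1) = 1) :
    Phi m n ξ < Phi m n (fun q =>
      if q = (i, j) then 1 else if q = (i + 1, j + 1) then 1
      else if q = (i + 1, j) then 0 else if q = (i, j + 1) then 0 else ξ q) := by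
  set ξ' : ℕ × ℕ → ℕ := fun q =>
      if q = (i, j) then 1 else if q = (i + 1, j + 1) then 1
      else if q = (i + 1, j) then 0 else if q = (i, j + 1) then 0 else ξ q with hξ'
  have hio : i % 2 = 1 ∧ j % 2 = 1 := by
    have := Finset.mem_filter.mp hij
    exact this.2
  apply Finset.card_lt_card
  rw [Finset.ssubset_iff_of_subset]
  · refine ⟨(i, j), ?_, ?_⟩
    · simp only [mem_filter]
      refine ⟨hij, ?_, ?_, ?_, ?_⟩ <;>
        simp [ξ', Prod.ext_iff] <;> omega
    · simp only [mem_filter, not_and]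
      intro _ h
      omega
  · intro p hp
    simp only [mem_filter] at hp ⊢
    obtain ⟨hpc, e1, e2, e3, e4⟩ := hp
    obtain ⟨a, b⟩ := p
    have hab : a % 2 = 1 ∧ b % 2 = 1 := by
      simp only [cornerSet, mem_filter] at hpc
      exact hpc.2
    have hne : ¬(a = i ∧ b = j) := by
      rintro ⟨rfl, rfl⟩; simp at e1; omega
    refine ⟨hpc, ?_, ?_, ?_, ?_⟩ <;>
      simp only [ξ', Prod.ext_iff] <;>
      rw [if_neg (by omega), if_neg (by omega), if_neg (by omega), if_neg (by omega)] <;>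
      assumption

/-- Termination of local switches: `Φ` is bounded by `mn/4`, a class-7 switch
(`𝔅₃₄ → 𝔅₃₃` in a single block) strictly increases `Φ`, and hence any sequence of
`Φ`-increasing switches has length at most `mn/4`. -/
theorem switches_terminate (m n : ℕ) (hm2 : m % 2 = 0) (hn2 : n % 2 = 0)
    (hm : 0 < m) (hn : 0 < n) :
    (∀ ξ : ℕ × ℕ → ℕ, Phi m n ξ ≤ m * n / 4) ∧
    (∀ (i j : ℕ), (i, j) ∈ cornerSet m n → ∀ ξ : ℕ × ℕ → ℕ,
      ξ (i, j) = 0 → ξ (i + 1, j + 1) = 0 → ξ (i + 1, j) = 1 → ξ (i, j + 1) = 1 →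
      Phi m n ξ < Phi m n (fun q =>
        if q = (i, j) then 1 else if q = (i + 1, j + 1) then 1
        else if q = (i + 1, j) then 0 else if q = (i, j + 1) then 0 else ξ q)) ∧
    (∀ (f : ℕ → (ℕ × ℕ → ℕ)) (N : ℕ),
      (∀ k < N, Phi m n (f k) < Phi m n (f (k + 1))) → N ≤ m * n / 4) := by
  have hbound : ∀ ξ : ℕ × ℕ → ℕ, Phi m n ξ ≤ m * n / 4 := fun ξ =>
    le_trans (Finset.card_filter_le _ _) (card_corner_le m n hm2 hn2)
  refine ⟨hbound, fun i j hij ξ h0 h0' h1 h1' => switch_increases m n i j hij ξ h0 h0' h1 h1', ?_⟩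
  intro f N hf
  have key : ∀ k ≤ N, k ≤ Phi m n (f k) := by
    intro k hk
    induction k with
    | zero => exact Nat.zero_le _
    | succ k ih =>
      have := hf k (by omega)
      have := ih (by omega)
      omega
  exact le_trans (key N le_rfl) (hbound (f N))
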